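/- For every fixed (ã, t) with ã ≥ 0 and 0 ≤ t < T, one has ∫_Ω | φ_ε(x, ã, t) − φ₀(x, ã, t) | dx → 0 as ε → 0⁺, where φ_ε(x, ã, t) := ∫_ã^{(T−t)/ε} exp( − ∫_ã^a ζ_ε(x, s, t + εs) ds )·ψ(x, a, t) da when ã < (T−t)/ε and φ_ε(x, ã, t) := 0 otherwise, and φ₀(x, ã, t) := ∫_ã^∞ exp( − ∫_ã^a ζ₀(x, s, t) ds )·ψ(x, a, t) da. -/

import Mathlib

open MeasureTheory Filter

/-- The transposed delay kernel
`φ_ε(x,ta,t) = ∫_ta^{(T−t)/ε} exp(−∫_ta^a ζ(x,s,t+εs) ds)·ψ(x,a,t) da`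
(for `ta < (T−t)/ε`, and `0` otherwise); here `ζ` is the off-rate at a fixed
value of `ε`. -/
noncomputable def phiEps (T ε : ℝ) (ζ : ℝ → ℝ → ℝ → ℝ) (ψ : ℝ → ℝ → ℝ → ℝ)
    (x ta t : ℝ) : ℝ :=
  if ta < (T - t) / ε then
    ∫ a in ta..((T - t) / ε),
      Real.exp (-∫ s in ta..a, ζ x s (t + ε * s)) * ψ x a t
  else 0

/-- The limiting kernel
`φ₀(x,ta,t) = ∫_ta^∞ exp(−∫_ta^a ζ₀(x,s,t) ds)·ψ(x,a,t) da`. -/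
noncomputable def phiZero (ζ₀ : ℝ → ℝ → ℝ → ℝ) (ψ : ℝ → ℝ → ℝ → ℝ)
    (x ta t : ℝ) : ℝ :=
  ∫ a in Set.Ioi ta, Real.exp (-∫ s in ta..a, ζ₀ x s t) * ψ x a t

section Helpers
open Set intervalIntegral

lemma myIntInt {f : ℝ → ℝ} (hf : Measurable f) {C : ℝ} (a b : ℝ)
    (hC : ∀ s ∈ Set.uIcc a b, |f s| ≤ C) : IntervalIntegrable f volume a b := by
  rw [intervalIntegrable_iff]
  refine Integrable.mono' (g := fun _ => C)
    (integrableOn_const measure_Ioc_lt_top.ne)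
    hf.aestronglyMeasurable.restrict ?_
  refine (ae_restrict_iff' measurableSet_uIoc).2 (Filter.Eventually.of_forall fun s hs => ?_)
  simpa using hC s (Set.uIoc_subset_uIcc hs)

lemma expLip {A A' : ℝ} (hA : 0 ≤ A) (hA' : 0 ≤ A') :
    |Real.exp (-A) - Real.exp (-A')| ≤ |A - A'| := by
  have key : ∀ u v : ℝ, 0 ≤ u → 0 ≤ v → u ≤ v →
      Real.exp (-u) - Real.exp (-v) ≤ v - u := by
    intro u v hu hv huv
    have h1 : (u - v) + 1 ≤ Real.exp (u - v) := Real.add_one_le_exp _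
    have h2 : Real.exp (-v) = Real.exp (-u) * Real.exp (u - v) := by
      rw [← Real.exp_add]; ring_nf
    have h3 : Real.exp (-u) ≤ 1 := Real.exp_le_one_iff.2 (by linarith)
    have h4 : 0 < Real.exp (-u) := Real.exp_pos _
    nlinarith
  rcases le_total A A' with h | h
  · have h0 : 0 ≤ Real.exp (-A) - Real.exp (-A') := by
      have := Real.exp_le_exp.2 (neg_le_neg h); linarith
    rw [abs_of_nonneg h0, abs_of_nonpos (by linarith : A - A' ≤ 0)]
    have := key A A' hA hA' h; linarith
  · have h0 : Real.exp (-A) - Real.exp (-A') ≤ 0 := by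
      have := Real.exp_le_exp.2 (neg_le_neg h); linarith
    rw [abs_of_nonpos h0, abs_of_nonneg (by linarith : 0 ≤ A - A')]
    have := key A' A hA' hA h; linarith

lemma keyEst (c B K ta R M : ℝ) (z z₀ p : ℝ → ℝ)
    (hc : 0 < c) (hta : 0 ≤ ta) (htaR : ta ≤ R) (hRM : R ≤ M)
    (hzm : Measurable z) (hz₀m : Measurable z₀) (hpm : Measurable p)
    (hzl : ∀ s, c ≤ z s) (hz₀l : ∀ s, c ≤ z₀ s)
    {Cm : ℝ} (hzb : ∀ s, z s ≤ Cm) (hz₀b : ∀ s, z₀ s ≤ Cm)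
    (hpb : ∀ a, |p a| ≤ B)
    (hclose : ∀ s ∈ Set.Icc ta R, |z s - z₀ s| ≤ K) :
    |(∫ a in ta..M, Real.exp (-∫ s in ta..a, z s) * p a) -
        ∫ a in Set.Ioi ta, Real.exp (-∫ s in ta..a, z₀ s) * p a| ≤
      B * K * (R - ta)^2 +
        2 * (Real.exp (-c * (R - ta) / 2) *
          ∫ a in Set.Ioi ta, B * Real.exp (-c * (a - ta) / 2)) := by
  have hB : 0 ≤ B := (abs_nonneg _).trans (hpb 0)
  have hK : 0 ≤ K := (abs_nonneg _).trans (hclose ta ⟨le_rfl, htaR⟩)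
  have habs : ∀ s, |z s| ≤ |c| + |Cm| := fun s => by
    have h1 := hzl s; have h2 := hzb s
    have := le_abs_self c; have := le_abs_self Cm
    have := abs_nonneg c; have := abs_nonneg Cm
    rw [abs_le]; constructor <;> linarith
  have habs₀ : ∀ s, |z₀ s| ≤ |c| + |Cm| := fun s => by
    have h1 := hz₀l s; have h2 := hz₀b s
    have := le_abs_self c; have := le_abs_self Cm
    have := abs_nonneg c; have := abs_nonneg Cm
    rw [abs_le]; constructor <;> linarith
  have hzint : ∀ u v : ℝ, IntervalIntegrable z volume u v :=
    fun u v => myIntInt hzm u v (fun s _ => habs s)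
  have hz₀int : ∀ u v : ℝ, IntervalIntegrable z₀ volume u v :=
    fun u v => myIntInt hz₀m u v (fun s _ => habs₀ s)
  set F : ℝ → ℝ := fun a => ∫ s in ta..a, z s with hFdef
  set F₀ : ℝ → ℝ := fun a => ∫ s in ta..a, z₀ s with hF₀def
  have hFcont : Continuous F := intervalIntegral.continuous_primitive hzint ta
  have hF₀cont : Continuous F₀ := intervalIntegral.continuous_primitive hz₀int ta
  have hFlb : ∀ a, ta ≤ a → c * (a - ta) ≤ F a := by
    intro a ha
    have h1 : (∫ s in ta..a, (c:ℝ)) ≤ ∫ s in ta..a, z s :=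
      intervalIntegral.integral_mono_on ha intervalIntegrable_const (hzint ta a)
        (fun s _ => hzl s)
    rw [intervalIntegral.integral_const, smul_eq_mul] at h1
    calc c * (a - ta) = (a - ta) * c := mul_comm _ _
      _ ≤ F a := h1
  have hF₀lb : ∀ a, ta ≤ a → c * (a - ta) ≤ F₀ a := by
    intro a ha
    have h1 : (∫ s in ta..a, (c:ℝ)) ≤ ∫ s in ta..a, z₀ s :=
      intervalIntegral.integral_mono_on ha intervalIntegrable_const (hz₀int ta a)
        (fun s _ => hz₀l s)
    rw [intervalIntegral.integral_const, smul_eq_mul] at h1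
    calc c * (a - ta) = (a - ta) * c := mul_comm _ _
      _ ≤ F₀ a := h1
  set g : ℝ → ℝ := fun a => Real.exp (-F a) * p a with hgdef
  set g₀ : ℝ → ℝ := fun a => Real.exp (-F₀ a) * p a with hg₀def
  have hgm : Measurable g := (Real.measurable_exp.comp hFcont.measurable.neg).mul hpm
  have hg₀m : Measurable g₀ := (Real.measurable_exp.comp hF₀cont.measurable.neg).mul hpm
  have hF0 : ∀ a, ta ≤ a → 0 ≤ F a := fun a ha =>
    le_trans (mul_nonneg hc.le (by linarith)) (hFlb a ha)
  have hF₀0 : ∀ a, ta ≤ a → 0 ≤ F₀ a := fun a ha =>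
    le_trans (mul_nonneg hc.le (by linarith)) (hF₀lb a ha)
  have hgb : ∀ a, ta ≤ a → |g a| ≤ B * Real.exp (-c * (a - ta)) := by
    intro a ha
    rw [hgdef, abs_mul, abs_of_pos (Real.exp_pos _)]
    have h1 : Real.exp (-F a) ≤ Real.exp (-c * (a - ta)) :=
      Real.exp_le_exp.2 (by have := hFlb a ha; linarith)
    calc Real.exp (-F a) * |p a| ≤ Real.exp (-c * (a - ta)) * B :=
          mul_le_mul h1 (hpb a) (abs_nonneg _) (Real.exp_pos _).le
      _ = B * Real.exp (-c * (a - ta)) := mul_comm _ _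
  have hg₀b : ∀ a, ta ≤ a → |g₀ a| ≤ B * Real.exp (-c * (a - ta)) := by
    intro a ha
    rw [hg₀def, abs_mul, abs_of_pos (Real.exp_pos _)]
    have h1 : Real.exp (-F₀ a) ≤ Real.exp (-c * (a - ta)) :=
      Real.exp_le_exp.2 (by have := hF₀lb a ha; linarith)
    calc Real.exp (-F₀ a) * |p a| ≤ Real.exp (-c * (a - ta)) * B :=
          mul_le_mul h1 (hpb a) (abs_nonneg _) (Real.exp_pos _).le
      _ = B * Real.exp (-c * (a - ta)) := mul_comm _ _
  set maj : ℝ → ℝ := fun a => B * Real.exp (-c * (a - ta) / 2) with hmajdef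
  have hmaj_int : IntegrableOn maj (Set.Ioi ta) := by
    have heq : maj = fun a => (B * Real.exp (c * ta / 2)) * Real.exp (-(c/2) * a) := by
      funext a; rw [hmajdef, mul_assoc, ← Real.exp_add]; ring_nf
    rw [heq]
    exact (exp_neg_integrableOn_Ioi ta (by positivity : (0:ℝ) < c/2)).const_mul _
  have hmaj_nonneg : ∀ a, 0 ≤ maj a := fun a => mul_nonneg hB (Real.exp_pos _).le
  have hmaj_ge : ∀ a, ta ≤ a → B * Real.exp (-c * (a - ta)) ≤ maj a := by
    intro a ha
    refine mul_le_mul_of_nonneg_left (Real.exp_le_exp.2 ?_) hB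
    nlinarith
  have hmaj_half : ∀ a, R ≤ a →
      B * Real.exp (-c * (a - ta)) ≤ Real.exp (-c * (R - ta) / 2) * maj a := by
    intro a ha
    have h1 : Real.exp (-c * (a - ta)) =
        Real.exp (-c * (a - ta) / 2) * Real.exp (-c * (a - ta) / 2) := by
      rw [← Real.exp_add]; ring_nf
    have h2 : Real.exp (-c * (a - ta) / 2) ≤ Real.exp (-c * (R - ta) / 2) :=
      Real.exp_le_exp.2 (by nlinarith)
    calc B * Real.exp (-c * (a - ta))
        = Real.exp (-c * (a - ta) / 2) * (B * Real.exp (-c * (a - ta) / 2)) := by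
          rw [h1]; ring
      _ ≤ Real.exp (-c * (R - ta) / 2) * maj a :=
          mul_le_mul_of_nonneg_right h2 (hmaj_nonneg a)
  have hg₀int : IntegrableOn g₀ (Set.Ioi ta) := by
    refine Integrable.mono' hmaj_int hg₀m.aestronglyMeasurable.restrict ?_
    refine (ae_restrict_iff' measurableSet_Ioi).2 (Filter.Eventually.of_forall fun a ha => ?_)
    have := (hg₀b a (le_of_lt ha)).trans (hmaj_ge a (le_of_lt ha))
    simpa using this
  have hgb1 : ∀ a, ta ≤ a → |g a| ≤ B := by
    intro a ha
    refine (hgb a ha).trans ?_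
    have h1 : Real.exp (-c * (a - ta)) ≤ 1 := Real.exp_le_one_iff.2 (by nlinarith)
    nlinarith
  have hg₀b1 : ∀ a, ta ≤ a → |g₀ a| ≤ B := by
    intro a ha
    refine (hg₀b a ha).trans ?_
    have h1 : Real.exp (-c * (a - ta)) ≤ 1 := Real.exp_le_one_iff.2 (by nlinarith)
    nlinarith
  have hg_ii : ∀ u v : ℝ, ta ≤ u → ta ≤ v → IntervalIntegrable g volume u v := by
    intro u v hu hv
    exact myIntInt hgm u v (fun s hs => hgb1 s ((le_min hu hv).trans hs.1))
  have hg₀_ii : IntervalIntegrable g₀ volume ta R :=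
    myIntInt hg₀m ta R (fun s hs => hg₀b1 s ((le_min le_rfl htaR).trans hs.1))
  -- splits
  have hsplit0 : (∫ a in Set.Ioi ta, g₀ a) =
      (∫ a in ta..R, g₀ a) + ∫ a in Set.Ioi R, g₀ a := by
    rw [intervalIntegral.integral_of_le htaR,
      ← MeasureTheory.setIntegral_union (Set.Ioc_disjoint_Ioi le_rfl) measurableSet_Ioi
        (hg₀int.mono_set Set.Ioc_subset_Ioi_self)
        (hg₀int.mono_set (Set.Ioi_subset_Ioi htaR)),
      Set.Ioc_union_Ioi_eq_Ioi htaR]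
  have hsplitε : (∫ a in ta..M, g a) = (∫ a in ta..R, g a) + ∫ a in R..M, g a :=
    (intervalIntegral.integral_add_adjacent_intervals (hg_ii ta R le_rfl htaR)
      (hg_ii R M htaR (htaR.trans hRM))).symm
  -- main term
  have hmain : |∫ a in ta..R, (g a - g₀ a)| ≤ B * K * (R - ta)^2 := by
    have hptw : ∀ a ∈ Set.uIoc ta R, ‖g a - g₀ a‖ ≤ B * (K * (R - ta)) := by
      intro a ha
      rw [Set.uIoc_of_le htaR] at ha
      have hFF : |F a - F₀ a| ≤ K * (a - ta) := by
        have heq : F a - F₀ a = ∫ s in ta..a, (z s - z₀ s) :=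
          (intervalIntegral.integral_sub (hzint ta a) (hz₀int ta a)).symm
        rw [heq]
        have h2 : ∀ s ∈ Set.uIoc ta a, ‖z s - z₀ s‖ ≤ K := by
          intro s hs
          rw [Set.uIoc_of_le ha.1.le] at hs
          exact hclose s ⟨hs.1.le, hs.2.trans ha.2⟩
        have h3 := intervalIntegral.norm_integral_le_of_norm_le_const h2
        rwa [Real.norm_eq_abs, abs_of_nonneg (by linarith [ha.1.le] : (0:ℝ) ≤ a - ta)] at h3
      have heq2 : g a - g₀ a = (Real.exp (-F a) - Real.exp (-F₀ a)) * p a := by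
        rw [hgdef, hg₀def]; ring
      rw [Real.norm_eq_abs, heq2, abs_mul]
      have h4 : |Real.exp (-F a) - Real.exp (-F₀ a)| ≤ |F a - F₀ a| :=
        expLip (hF0 a ha.1.le) (hF₀0 a ha.1.le)
      have h5 : |F a - F₀ a| ≤ K * (R - ta) := by
        refine hFF.trans ?_
        have := ha.2; nlinarith
      calc |Real.exp (-F a) - Real.exp (-F₀ a)| * |p a|
          ≤ (K * (R - ta)) * B :=
            mul_le_mul (h4.trans h5) (hpb a) (abs_nonneg _) (by nlinarith)
        _ = B * (K * (R - ta)) := mul_comm _ _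
    have h := intervalIntegral.norm_integral_le_of_norm_le_const hptw
    rw [Real.norm_eq_abs, abs_of_nonneg (by linarith : (0:ℝ) ≤ R - ta)] at h
    calc |∫ a in ta..R, (g a - g₀ a)| ≤ B * (K * (R - ta)) * (R - ta) := h
      _ = B * K * (R - ta)^2 := by ring
  -- tails
  set E : ℝ := Real.exp (-c * (R - ta) / 2) with hEdef
  have hE0 : 0 ≤ E := (Real.exp_pos _).le
  set D : ℝ := ∫ a in Set.Ioi ta, maj a with hDdef
  have hmajR : (∫ a in Set.Ioi R, maj a) ≤ D := by
    refine setIntegral_mono_set hmaj_int ?_ ?_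
    · exact Filter.Eventually.of_forall hmaj_nonneg
    · exact (Set.Ioi_subset_Ioi htaR).eventuallyLE
  have htail₀ : |∫ a in Set.Ioi R, g₀ a| ≤ E * D := by
    have h1 : |∫ a in Set.Ioi R, g₀ a| ≤ ∫ a in Set.Ioi R, |g₀ a| := by
      simpa [Real.norm_eq_abs] using
        MeasureTheory.norm_integral_le_integral_norm (μ := volume.restrict (Set.Ioi R)) g₀
    have h2 : (∫ a in Set.Ioi R, |g₀ a|) ≤ ∫ a in Set.Ioi R, E * maj a := by
      refine setIntegral_mono_on
        ((hg₀int.mono_set (Set.Ioi_subset_Ioi htaR)).abs)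
        (((hmaj_int.mono_set (Set.Ioi_subset_Ioi htaR))).const_mul E)
        measurableSet_Ioi (fun a ha => ?_)
      exact (hg₀b a (htaR.trans (le_of_lt ha))).trans (hmaj_half a (le_of_lt ha))
    have h3 : (∫ a in Set.Ioi R, E * maj a) = E * ∫ a in Set.Ioi R, maj a :=
      MeasureTheory.integral_const_mul E _
    have h4 : E * (∫ a in Set.Ioi R, maj a) ≤ E * D :=
      mul_le_mul_of_nonneg_left hmajR hE0
    linarith
  have htailε : |∫ a in R..M, g a| ≤ E * D := by
    rw [intervalIntegral.integral_of_le hRM]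
    have hgIoc : IntegrableOn g (Set.Ioc R M) :=
      (intervalIntegrable_iff_integrableOn_Ioc_of_le hRM).1
        (hg_ii R M htaR (htaR.trans hRM))
    have h1 : |∫ a in Set.Ioc R M, g a| ≤ ∫ a in Set.Ioc R M, |g a| := by
      simpa [Real.norm_eq_abs] using
        MeasureTheory.norm_integral_le_integral_norm (μ := volume.restrict (Set.Ioc R M)) g
    have h2 : (∫ a in Set.Ioc R M, |g a|) ≤ ∫ a in Set.Ioc R M, E * maj a := by
      refine setIntegral_mono_on hgIoc.abs
        ((hmaj_int.mono_set ((Set.Ioc_subset_Ioi_self).trans (Set.Ioi_subset_Ioi htaR))).const_mul E)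
        measurableSet_Ioc (fun a ha => ?_)
      exact (hgb a (htaR.trans ha.1.le)).trans (hmaj_half a ha.1.le)
    have h3 : (∫ a in Set.Ioc R M, E * maj a) = E * ∫ a in Set.Ioc R M, maj a :=
      MeasureTheory.integral_const_mul E _
    have h4 : (∫ a in Set.Ioc R M, maj a) ≤ ∫ a in Set.Ioi R, maj a := by
      refine setIntegral_mono_set (hmaj_int.mono_set (Set.Ioi_subset_Ioi htaR))
        (Filter.Eventually.of_forall hmaj_nonneg)
        (Set.Ioc_subset_Ioi_self).eventuallyLE
    nlinarith [mul_le_mul_of_nonneg_left h4 hE0, mul_le_mul_of_nonneg_left hmajR hE0]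
  -- assembly
  have hdecomp : (∫ a in ta..M, g a) - (∫ a in Set.Ioi ta, g₀ a) =
      (∫ a in ta..R, (g a - g₀ a)) + ((∫ a in R..M, g a) - ∫ a in Set.Ioi R, g₀ a) := by
    rw [hsplitε, hsplit0, intervalIntegral.integral_sub (hg_ii ta R le_rfl htaR) hg₀_ii]
    ring
  calc |(∫ a in ta..M, g a) - ∫ a in Set.Ioi ta, g₀ a|
      = |(∫ a in ta..R, (g a - g₀ a)) + ((∫ a in R..M, g a) - ∫ a in Set.Ioi R, g₀ a)| := by
        rw [hdecomp]
    _ ≤ |∫ a in ta..R, (g a - g₀ a)| + |(∫ a in R..M, g a) - ∫ a in Set.Ioi R, g₀ a| :=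
        abs_add_le _ _
    _ ≤ B * K * (R - ta)^2 + (|∫ a in R..M, g a| + |∫ a in Set.Ioi R, g₀ a|) :=
        add_le_add hmain (abs_sub _ _)
    _ ≤ B * K * (R - ta)^2 + (E * D + E * D) :=
        add_le_add le_rfl (add_le_add htailε htail₀)
    _ = B * K * (R - ta)^2 + 2 * (E * D) := by ring

end Helpers

set_option maxHeartbeats 1000000 in
/-- (Corollary `coro.cvg.phi`.) For every fixed `(ta,t)` with
`ta ≥ 0` and `0 ≤ t < T`, `‖φ_ε(·,ta,t) − φ₀(·,ta,t)‖_{L¹(Ω)} → 0` as `ε → 0⁺`. -/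
theorem stmt9
    (T ζmin ζmax L B : ℝ) (hT : 0 < T) (hζmin : 0 < ζmin)
    (ζ : ℝ → ℝ → ℝ → ℝ → ℝ) (ζ₀ : ℝ → ℝ → ℝ → ℝ)
    (hζmeas : ∀ ε > (0:ℝ), Measurable (fun p : ℝ × ℝ × ℝ => ζ ε p.1 p.2.1 p.2.2))
    (hζ₀meas : Measurable (fun p : ℝ × ℝ × ℝ => ζ₀ p.1 p.2.1 p.2.2))
    (hζbd : ∀ ε > (0:ℝ), ∀ x ∈ Set.Ioo (0:ℝ) 1, ∀ a ∈ Set.Ici (0:ℝ),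
      ∀ t ∈ Set.Icc (0:ℝ) T, ζmin ≤ ζ ε x a t ∧ ζ ε x a t ≤ ζmax)
    (hζ₀bd : ∀ x ∈ Set.Ioo (0:ℝ) 1, ∀ a ∈ Set.Ici (0:ℝ),
      ∀ t ∈ Set.Icc (0:ℝ) T, ζmin ≤ ζ₀ x a t ∧ ζ₀ x a t ≤ ζmax)
    (hζcv : ∀ δ > (0:ℝ), ∀ᶠ ε in nhdsWithin (0:ℝ) (Set.Ioi 0),
      ∀ x ∈ Set.Ioo (0:ℝ) 1, ∀ a ∈ Set.Ici (0:ℝ), ∀ t ∈ Set.Icc (0:ℝ) T,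
        |ζ ε x a t - ζ₀ x a t| ≤ δ)
    (hζ₀Lip : ∀ x a t₁ t₂ : ℝ, |ζ₀ x a t₂ - ζ₀ x a t₁| ≤ L * |t₂ - t₁|)
    (ψ : ℝ → ℝ → ℝ → ℝ)
    (hψmeas : Measurable (fun p : ℝ × ℝ × ℝ => ψ p.1 p.2.1 p.2.2))
    (hψbd : ∀ x a t : ℝ, |ψ x a t| ≤ B) :
    ∀ ta ∈ Set.Ici (0:ℝ), ∀ t ∈ Set.Ico (0:ℝ) T,
      Filter.Tendsto
        (fun ε => ∫ x in Set.Ioo (0:ℝ) 1,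
          |phiEps T ε (ζ ε) ψ x ta t - phiZero ζ₀ ψ x ta t|)
        (nhdsWithin (0:ℝ) (Set.Ioi 0)) (nhds 0) := by
  intro ta hta t ht
  have hta0 : (0:ℝ) ≤ ta := hta
  have hx0 : (1/2 : ℝ) ∈ Set.Ioo (0:ℝ) 1 := by norm_num
  have hmm : ζmin ≤ ζmax := by
    have h := hζbd 1 one_pos (1/2) hx0 0 (Set.mem_Ici.2 le_rfl) 0 (Set.mem_Icc.2 ⟨le_rfl, hT.le⟩)
    linarith [h.1, h.2]
  have hL0 : 0 ≤ L := by
    have h := hζ₀Lip 0 0 0 1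
    simp at h
    exact le_trans (abs_nonneg _) h
  have hB0 : 0 ≤ B := le_trans (abs_nonneg _) (hψbd 0 0 0)
  have htT : t ∈ Set.Icc (0:ℝ) T := ⟨ht.1, ht.2.le⟩
  have hTt : 0 < T - t := by linarith [ht.2]
  -- truncation
  set zc : ℝ → ℝ := fun v => max ζmin (min v ζmax) with hzcdef
  have hzc_cont : Continuous zc := continuous_const.max (continuous_id.min continuous_const)
  have hzc_lb : ∀ v, ζmin ≤ zc v := fun v => le_max_left _ _
  have hzc_ub : ∀ v, zc v ≤ ζmax := fun v => max_le hmm (min_le_right _ _)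
  have hzc_eq : ∀ v, ζmin ≤ v → v ≤ ζmax → zc v = v := by
    intro v h1 h2
    rw [hzcdef]
    simp only
    rw [min_eq_left h2, max_eq_right h1]
  have hzc_lip : ∀ u v, |zc u - zc v| ≤ |u - v| := by
    intro u v
    calc |zc u - zc v| = |max (min u ζmax) ζmin - max (min v ζmax) ζmin| := by
          rw [hzcdef]; simp only; rw [max_comm ζmin, max_comm ζmin]
      _ ≤ |min u ζmax - min v ζmax| := abs_max_sub_max_le_abs _ _ _
      _ ≤ max |u - v| |ζmax - ζmax| := abs_min_sub_min_le_max _ _ _ _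
      _ = |u - v| := by simp
  set D : ℝ := ∫ a in Set.Ioi ta, B * Real.exp (-ζmin * (a - ta) / 2) with hDdef
  have hD0 : 0 ≤ D := by
    rw [hDdef]
    exact MeasureTheory.integral_nonneg (fun a => mul_nonneg hB0 (Real.exp_pos _).le)
  rw [Metric.tendsto_nhds]
  intro η hη
  -- choose u (then R = ta + u)
  obtain ⟨u, hu0, hu⟩ : ∃ u : ℝ, 0 ≤ u ∧ 2 * (Real.exp (-ζmin * u / 2) * D) < η / 2 := by
    have hlin : Tendsto (fun u : ℝ => -ζmin * u / 2) atTop atBot := by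
      apply Tendsto.atBot_div_const (by norm_num : (0:ℝ) < 2)
      exact tendsto_id.const_mul_atTop_of_neg (by linarith)
    have htend : Tendsto (fun u : ℝ => 2 * (Real.exp (-ζmin * u / 2) * D)) atTop
        (nhds (2 * (0 * D))) :=
      (((Real.tendsto_exp_atBot.comp hlin).mul_const D).const_mul 2)
    rw [zero_mul, mul_zero] at htend
    have h2 := htend.eventually_lt_const (by linarith : (0:ℝ) < η / 2)
    exact ((eventually_ge_atTop (0:ℝ)).and h2).exists.imp (fun u h => ⟨h.1, h.2⟩)
  set R : ℝ := ta + u with hRdef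
  have htaR : ta ≤ R := by rw [hRdef]; linarith
  have hRta : R - ta = u := by rw [hRdef]; ring
  have hR0 : 0 ≤ R := hta0.trans htaR
  set θ : ℝ := η / 2 / ((B + 1) * ((R - ta)^2 + 1)) with hθdef
  have hd : 0 < (B + 1) * ((R - ta)^2 + 1) :=
    mul_pos (by linarith) (by positivity)
  have hθ0 : 0 < θ := div_pos (by linarith) hd
  set δ : ℝ := θ / 2 with hδdef
  have hδ0 : 0 < δ := by rw [hδdef]; linarith
  set ε₁ : ℝ := (T - t) / (R + 1) with hε₁def
  have hε₁0 : 0 < ε₁ := div_pos hTt (by linarith)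
  set ε₂ : ℝ := θ / (2 * (L + 1) * (R + 1)) with hε₂def
  have hε₂0 : 0 < ε₂ := div_pos hθ0 (by positivity)
  have hev1 := hζcv δ hδ0
  have hev2 : ∀ᶠ ε' in nhdsWithin (0:ℝ) (Set.Ioi 0), ε' < min ε₁ ε₂ :=
    Filter.Eventually.filter_mono nhdsWithin_le_nhds
      (eventually_lt_nhds (lt_min hε₁0 hε₂0))
  have hev3 : ∀ᶠ ε' in nhdsWithin (0:ℝ) (Set.Ioi 0), ε' ∈ Set.Ioi (0:ℝ) :=
    eventually_mem_nhdsWithin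
  filter_upwards [hev1, hev2, hev3] with ε hδε hεsmall hε0'
  have hε0 : 0 < ε := hε0'
  have hεε₁ : ε < ε₁ := lt_of_lt_of_le hεsmall (min_le_left _ _)
  have hεε₂ : ε < ε₂ := lt_of_lt_of_le hεsmall (min_le_right _ _)
  set M : ℝ := (T - t) / ε with hMdef
  have hRM : R + 1 ≤ M := by
    rw [hMdef, le_div_iff₀ hε0]
    have h1 : ε * (R + 1) < T - t := by
      have := (lt_div_iff₀ (by linarith : (0:ℝ) < R + 1)).1 hεε₁
      linarith
    linarith
  have htaM : ta < M := by linarith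
  have hRM' : R ≤ M := by linarith
  have hεM : ε * M = T - t := by
    rw [hMdef]; field_simp
  have htime : ∀ s : ℝ, 0 ≤ s → s ≤ M → t + ε * s ∈ Set.Icc (0:ℝ) T := by
    intro s hs0 hsM
    constructor
    · have : 0 ≤ ε * s := mul_nonneg hε0.le hs0
      linarith [ht.1]
    · have : ε * s ≤ ε * M := mul_le_mul_of_nonneg_left hsM hε0.le
      linarith
  set bound : ℝ := B * (δ + L * ε * R) * (R - ta)^2 +
      2 * (Real.exp (-ζmin * (R - ta) / 2) * D) with hbounddef
  -- pointwise bound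
  have hptw : ∀ x ∈ Set.Ioo (0:ℝ) 1,
      |phiEps T ε (ζ ε) ψ x ta t - phiZero ζ₀ ψ x ta t| ≤ bound := by
    intro x hx
    set z : ℝ → ℝ := fun s => zc (ζ ε x s (t + ε * s)) with hzdef
    set z₀ : ℝ → ℝ := fun s => zc (ζ₀ x s t) with hz₀def
    have hze : ∀ s, ta ≤ s → s ≤ M → z s = ζ ε x s (t + ε * s) := by
      intro s h1 h2
      have hs0 : 0 ≤ s := hta0.trans h1
      have hb := hζbd ε hε0 x hx s hs0 (t + ε * s) (htime s hs0 h2)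
      exact hzc_eq _ hb.1 hb.2
    have hz₀e : ∀ s, ta ≤ s → z₀ s = ζ₀ x s t := by
      intro s h1
      have hb := hζ₀bd x hx s (hta0.trans h1) t htT
      exact hzc_eq _ hb.1 hb.2
    have hphiEps_eq : phiEps T ε (ζ ε) ψ x ta t =
        ∫ a in ta..M, Real.exp (-∫ s in ta..a, z s) * ψ x a t := by
      rw [phiEps, ← hMdef, if_pos htaM]
      apply intervalIntegral.integral_congr
      intro a ha
      rw [Set.uIcc_of_le htaM.le] at ha
      have hinner : (∫ s in ta..a, ζ ε x s (t + ε * s)) = ∫ s in ta..a, z s := by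
        apply intervalIntegral.integral_congr
        intro s hs
        rw [Set.uIcc_of_le ha.1] at hs
        exact (hze s hs.1 (hs.2.trans ha.2)).symm
      simp only [hinner]
    have hphiZero_eq : phiZero ζ₀ ψ x ta t =
        ∫ a in Set.Ioi ta, Real.exp (-∫ s in ta..a, z₀ s) * ψ x a t := by
      rw [phiZero]
      apply MeasureTheory.setIntegral_congr_fun measurableSet_Ioi
      intro a ha
      have hinner : (∫ s in ta..a, ζ₀ x s t) = ∫ s in ta..a, z₀ s := by
        apply intervalIntegral.integral_congr
        intro s hs
        rw [Set.uIcc_of_le (le_of_lt ha)] at hs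
        exact (hz₀e s hs.1).symm
      simp only [hinner]
    have hzm : Measurable z := by
      apply hzc_cont.measurable.comp
      exact (hζmeas ε hε0).comp
        (measurable_const.prodMk (measurable_id.prodMk
          ((measurable_id.const_mul ε).const_add t)))
    have hz₀m : Measurable z₀ := by
      apply hzc_cont.measurable.comp
      exact hζ₀meas.comp
        (measurable_const.prodMk (measurable_id.prodMk measurable_const))
    have hpm : Measurable (fun a => ψ x a t) :=
      hψmeas.comp (measurable_const.prodMk (measurable_id.prodMk measurable_const))
    have hclose : ∀ s ∈ Set.Icc ta R, |z s - z₀ s| ≤ δ + L * ε * R := by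
      intro s hs
      have hs0 : 0 ≤ s := hta0.trans hs.1
      have hsM : s ≤ M := hs.2.trans hRM'
      have h1 : |z s - z₀ s| ≤ |ζ ε x s (t + ε * s) - ζ₀ x s t| := hzc_lip _ _
      have h2 : |ζ ε x s (t + ε * s) - ζ₀ x s (t + ε * s)| ≤ δ :=
        hδε x hx s hs0 (t + ε * s) (htime s hs0 hsM)
      have h3 : |ζ₀ x s (t + ε * s) - ζ₀ x s t| ≤ L * (ε * s) := by
        have h := hζ₀Lip x s t (t + ε * s)
        rw [show t + ε * s - t = ε * s by ring,
          abs_of_nonneg (mul_nonneg hε0.le hs0)] at h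
        exact h
      have h4 : L * (ε * s) ≤ L * ε * R := by
        rw [← mul_assoc]
        apply mul_le_mul_of_nonneg_left hs.2 (mul_nonneg hL0 hε0.le)
      calc |z s - z₀ s| ≤ |ζ ε x s (t + ε * s) - ζ₀ x s t| := h1
        _ ≤ |ζ ε x s (t + ε * s) - ζ₀ x s (t + ε * s)| +
            |ζ₀ x s (t + ε * s) - ζ₀ x s t| := abs_sub_le _ _ _
        _ ≤ δ + L * ε * R := by linarith
    have hKey := keyEst ζmin B (δ + L * ε * R) ta R M z z₀ (fun a => ψ x a t)
      hζmin hta0 htaR hRM' hzm hz₀m hpm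
      (fun s => hzc_lb _) (fun s => hzc_lb _) (Cm := ζmax)
      (fun s => hzc_ub _) (fun s => hzc_ub _)
      (fun a => hψbd x a t) hclose
    rw [hphiEps_eq, hphiZero_eq, hbounddef, hDdef]
    exact hKey
  -- integrate the bound
  have hvol : (volume (Set.Ioo (0:ℝ) 1)).toReal = 1 := by
    simp [Real.volume_Ioo]
  have hint : ‖∫ x in Set.Ioo (0:ℝ) 1,
      |phiEps T ε (ζ ε) ψ x ta t - phiZero ζ₀ ψ x ta t|‖ ≤
      bound * (volume (Set.Ioo (0:ℝ) 1)).toReal := by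
    apply MeasureTheory.norm_setIntegral_le_of_norm_le_const
    · rw [Real.volume_Ioo]; norm_num
    · intro x hx
      rw [Real.norm_eq_abs, abs_abs]
      exact hptw x hx
  rw [hvol, mul_one] at hint
  clear_value zc D R θ δ ε₁ ε₂ M bound
  have hb_lt : bound < η := by
    have hK'θ : δ + L * ε * R < θ := by
      have h1 : L * ε * R ≤ (L + 1) * ε * (R + 1) := by nlinarith
      have h2 : (L + 1) * ε * (R + 1) < θ / 2 := by
        have h3 : ε * (2 * (L + 1) * (R + 1)) < θ := by
          rw [hε₂def] at hεε₂
          have := (lt_div_iff₀ (by positivity : (0:ℝ) < 2 * (L + 1) * (R + 1))).1 hεε₂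
          linarith
        nlinarith
      rw [hδdef]; linarith
    have hθeq : (B + 1) * ((R - ta)^2 + 1) * θ = η / 2 := by
      rw [hθdef]; field_simp
    have hS : (0:ℝ) ≤ (R - ta)^2 := sq_nonneg _
    have hK'0 : 0 ≤ δ + L * ε * R :=
      (add_pos_of_pos_of_nonneg hδ0 (mul_nonneg (mul_nonneg hL0 hε0.le) hR0)).le
    have step1 : B * (δ + L * ε * R) * (R - ta)^2 ≤ B * θ * (R - ta)^2 :=
      mul_le_mul_of_nonneg_right (mul_le_mul_of_nonneg_left hK'θ.le hB0) hS
    have step2 : B * θ * (R - ta)^2 < (B + 1) * ((R - ta)^2 + 1) * θ := by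
      have e2 : 0 < θ * (B + (R - ta)^2 + 1) := mul_pos hθ0 (by nlinarith)
      nlinarith [e2]
    have hpart2 : 2 * (Real.exp (-ζmin * (R - ta) / 2) * D) < η / 2 := by
      rw [hRta]; exact hu
    rw [hbounddef]
    linarith
  rw [dist_zero_right]
  exact lt_of_le_of_lt hint hb_lt
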